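/- Let C ⊆ F_q^n be a code of dimension k and minimum distance d. Then E[C] = n(H_n − H_{d−1}) − sum_{s=k}^{n−d} α(C,s)/binom(n−1,s). -/

import Mathlib

/-- Gaussian binomial coefficient as a polynomial in `q`, evaluated at an integer. -/
def qb (q : ℤ) : ℕ → ℕ → ℤ
  | _, 0 => 1
  | 0, _+1 => 0
  | n+1, k+1 => qb q n k + q ^ (k+1) * qb q n (k+1)

/-- Hamming weight of a vector. -/
noncomputable def hamWt {R : Type*} [Zero R] {n : ℕ} (x : Fin n → R) : ℕ :=
  Nat.card {i : Fin n // x i ≠ 0}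

/-- The `n`-th harmonic number. -/
noncomputable def harm (n : ℕ) : ℝ := ∑ i ∈ Finset.range n, (1 : ℝ) / (i + 1)

/-- Expected number of i.i.d. uniform draws of columns of `G` (with replacement)
until the drawn columns span `F^k`, written as `∑_{t≥0} P(T > t)`. -/
noncomputable def coverDepth {F : Type*} [Field F] {k n : ℕ}
    (G : Matrix (Fin k) (Fin n) F) : ℝ :=
  ∑' t : ℕ, (Nat.card {f : Fin t → Fin n //
      Submodule.span F (Set.range fun i => fun r => G r (f i)) ≠ ⊤} : ℝ) / (n : ℝ) ^ t

/-- Vectors whose support is contained in the finite set `S`. -/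
def zeroOutside (F : Type*) [Field F] (n : ℕ) (S : Finset (Fin n)) :
    Submodule F (Fin n → F) where
  carrier := {x | ∀ i ∉ S, x i = 0}
  add_mem' := by intro a b ha hb i hi; simp [ha i hi, hb i hi]
  zero_mem' := by intro i hi; rfl
  smul_mem' := by intro c a ha i hi; simp [ha i hi]

/-- The dual code with respect to the standard bilinear form. -/
def dualCode (F : Type*) [Field F] (n : ℕ) (C : Submodule F (Fin n → F)) :
    Submodule F (Fin n → F) where
  carrier := {y | ∀ x ∈ C, ∑ i, x i * y i = 0}
  add_mem' := by
    intro a b ha hb x hx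
    simp only [Pi.add_apply, mul_add, Finset.sum_add_distrib, ha x hx, hb x hx, add_zero]
  zero_mem' := by intro x hx; simp
  smul_mem' := by
    intro c a ha x hx
    simp only [Pi.smul_apply, smul_eq_mul, mul_left_comm, ← Finset.mul_sum, ha x hx, mul_zero]

/-- Projection onto the coordinates indexed by `S`. -/
def projS (F : Type*) [Field F] {n : ℕ} (S : Finset (Fin n)) :
    (Fin n → F) →ₗ[F] ({x // x ∈ S} → F) :=
  LinearMap.funLeft F F (fun i => (i : Fin n))

/-- The extension code of `C` over an extension field `E`. -/
def extCode {F E : Type*} [Field F] [Field E] [Algebra F E] {n : ℕ}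
    (C : Submodule F (Fin n → F)) : Submodule E (Fin n → E) :=
  Submodule.span E ((fun c : Fin n → F => fun i => algebraMap F E (c i)) '' C)

open Finset

noncomputable def SurjCount (t s : ℕ) : ℕ :=
  Nat.card {f : Fin t → Fin s // Function.Surjective f}

lemma surjCount_zero_zero : SurjCount 0 0 = 1 := by
  rw [SurjCount, Nat.card_eq_one_iff_unique]
  constructor
  · constructor
    intro a b
    ext i; exact absurd i.2 (by omega)
  · exact ⟨⟨fun i => absurd i.2 (by omega), fun y => absurd y.2 (by omega)⟩⟩

lemma surjCount_zero_succ (s : ℕ) : SurjCount 0 (s+1) = 0 := by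
  rw [SurjCount, Nat.card_eq_zero]
  left
  constructor
  rintro ⟨f, hf⟩
  obtain ⟨i, -⟩ := hf 0
  exact absurd i.2 (by omega)

lemma surjCount_le (t s : ℕ) : SurjCount t s ≤ s ^ t := by
  rw [SurjCount, Nat.card_eq_fintype_card]
  calc Fintype.card {f : Fin t → Fin s // Function.Surjective f}
      ≤ Fintype.card (Fin t → Fin s) := Fintype.card_subtype_le _
    _ = s ^ t := by simp [Fintype.card_fun]

/-- counting functions with prescribed range -/
lemma card_range_eq {β : Type*} [Fintype β] [DecidableEq β] (t : ℕ) (S : Finset β) :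
    Nat.card {f : Fin t → β // Set.range f = (S : Set β)} = SurjCount t S.card := by
  rw [SurjCount]
  apply Nat.card_congr
  have hmem : ∀ (f : {f : Fin t → β // Set.range f = (S : Set β)}) (i : Fin t), f.1 i ∈ S := by
    intro f i
    have h := Set.mem_range_self (f := f.1) i
    rw [f.2] at h
    exact h
  exact {
    toFun := fun f => ⟨fun i => S.equivFin ⟨f.1 i, hmem f i⟩, by
      intro y
      have hy : (S.equivFin.symm y : β) ∈ Set.range f.1 := by
        rw [f.2]; exact Finset.mem_coe.mpr (S.equivFin.symm y).2
      obtain ⟨i, hi⟩ := hy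
      exact ⟨i, by
        show S.equivFin ⟨f.1 i, hmem f i⟩ = y
        rw [show (⟨f.1 i, hmem f i⟩ : {x // x ∈ S}) = S.equivFin.symm y from Subtype.ext hi,
          Equiv.apply_symm_apply]⟩⟩
    invFun := fun g => ⟨fun i => (S.equivFin.symm (g.1 i) : β), by
      ext x
      simp only [Set.mem_range, Finset.mem_coe]
      constructor
      · rintro ⟨i, rfl⟩; exact (S.equivFin.symm (g.1 i)).2
      · intro hx
        obtain ⟨i, hi⟩ := g.2 (S.equivFin ⟨x, hx⟩)
        exact ⟨i, by rw [hi, Equiv.symm_apply_apply]⟩⟩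
    left_inv := fun f => by ext i; simp
    right_inv := fun g => by ext i; simp }

lemma insert_eq_univ_iff {α : Type*} (a : α) (s : Set α) :
    insert a s = Set.univ ↔ s = Set.univ ∨ s = Set.univ \ {a} := by
  constructor
  · intro h
    by_cases ha : a ∈ s
    · left
      ext x
      simp only [Set.mem_univ, iff_true]
      rcases eq_or_ne x a with rfl | hx
      · exact ha
      · have hx2 : x ∈ insert a s := h ▸ Set.mem_univ x
        exact hx2.resolve_left hx
    · right
      ext x
      simp only [Set.mem_diff, Set.mem_univ, Set.mem_singleton_iff, true_and]
      constructor
      · intro hx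
        rintro rfl
        exact ha hx
      · intro hx
        have hx2 : x ∈ insert a s := h ▸ Set.mem_univ x
        exact hx2.resolve_left hx
  · rintro (rfl | rfl) <;> simp [Set.insert_diff_singleton]

lemma surjCount_succ (t s : ℕ) :
    SurjCount (t+1) s = s * (SurjCount t s + SurjCount t (s-1)) := by
  classical
  rcases Nat.eq_zero_or_pos s with rfl | hs
  · have : IsEmpty {f : Fin (t+1) → Fin 0 // Function.Surjective f} := by
      constructor; rintro ⟨f, -⟩; exact (f 0).elim0
    rw [SurjCount, Nat.card_of_isEmpty, Nat.zero_mul]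
  · have step1 : SurjCount (t+1) s
        = Nat.card (Σ c : Fin s, {g : Fin t → Fin s //
            Set.range g = Set.univ ∨ Set.range g = Set.univ \ {c}}) := by
      rw [SurjCount]
      apply Nat.card_congr
      exact {
        toFun := fun f => ⟨f.1 0, Fin.tail f.1, by
          have h : insert (f.1 0) (Set.range (Fin.tail f.1)) = Set.univ := by
            rw [← Fin.range_cons (f.1 0) (Fin.tail f.1), Fin.cons_self_tail]
            exact Set.range_eq_univ.mpr f.2
          exact (insert_eq_univ_iff _ _).mp h⟩
        invFun := fun x => ⟨Fin.cons x.1 x.2.1, by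
          rw [← Set.range_eq_univ, Fin.range_cons]
          rcases x.2.2 with h | h <;> rw [h] <;> simp [Set.insert_diff_singleton]⟩
        left_inv := fun f => Subtype.ext (Fin.cons_self_tail f.1)
        right_inv := fun x => by
          rcases x with ⟨c, g, hg⟩
          refine Sigma.ext rfl ?_
          refine heq_of_eq ?_
          apply Subtype.ext
          funext i
          simp [Fin.tail_cons] }
    have fib : ∀ c : Fin s, Nat.card {g : Fin t → Fin s //
        Set.range g = Set.univ ∨ Set.range g = Set.univ \ {c}}
        = SurjCount t s + SurjCount t (s-1) := by
      intro c
      have hdisj : Disjoint (fun g : Fin t → Fin s => Set.range g = Set.univ)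
          (fun g => Set.range g = Set.univ \ {c}) := by
        rw [Pi.disjoint_iff]
        intro g
        rw [Prop.disjoint_iff]
        rintro ⟨h1, h2⟩
        have : c ∈ Set.univ \ ({c} : Set (Fin s)) := by rw [← h2, h1]; trivial
        simp at this
      have h1 : Fintype.card {g : Fin t → Fin s // Set.range g = Set.univ}
          = SurjCount t s := by
        rw [SurjCount, ← Nat.card_eq_fintype_card]
        exact Nat.card_congr (Equiv.subtypeEquivRight fun g => Set.range_eq_univ)
      have h2 : Fintype.card {g : Fin t → Fin s // Set.range g = Set.univ \ {c}}
          = SurjCount t (s-1) := by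
        rw [← Nat.card_eq_fintype_card]
        have h := card_range_eq t ((Finset.univ : Finset (Fin s)).erase c)
        rw [Finset.coe_erase, Finset.coe_univ,
          Finset.card_erase_of_mem (Finset.mem_univ c), Finset.card_univ,
          Fintype.card_fin] at h
        exact h
      rw [Nat.card_eq_fintype_card, Fintype.card_subtype_or_disjoint _ _ hdisj, h1, h2]
    rw [step1, Nat.card_eq_fintype_card, Fintype.card_sigma]
    simp only [← Nat.card_eq_fintype_card, fib]
    rw [Finset.sum_const, Finset.card_univ, Fintype.card_fin, smul_eq_mul]



lemma surjCount_summable {n s : ℕ} (hs : s < n) :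
    Summable (fun t => (SurjCount t s : ℝ) / (n:ℝ)^t) := by
  have hn : (0:ℝ) < n := Nat.cast_pos.mpr (by omega)
  refine Summable.of_nonneg_of_le (fun t => by positivity) (fun t => ?_)
    (summable_geometric_of_lt_one (r := (s:ℝ)/n) (by positivity)
      ((div_lt_one hn).mpr (by exact_mod_cast hs)))
  rw [div_pow]
  apply div_le_div_of_nonneg_right ?_ (by positivity)
  exact_mod_cast surjCount_le t s

lemma tsum_surjCount {n : ℕ} (hn : 1 ≤ n) :
    ∀ s : ℕ, s ≤ n - 1 →
      ∑' t : ℕ, (SurjCount t s : ℝ) / (n:ℝ)^t = 1 / ((n-1).choose s) := by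
  intro s
  induction s with
  | zero =>
    intro _
    rw [Nat.choose_zero_right]
    have h : ∀ t : ℕ, (SurjCount t 0 : ℝ) / (n:ℝ)^t = if t = 0 then 1 else 0 := by
      intro t
      cases t with
      | zero => simp [surjCount_zero_zero]
      | succ m => rw [surjCount_succ]; simp
    rw [tsum_congr h, tsum_ite_eq]
    norm_num
  | succ m ih =>
    intro hs
    have hB := ih (by omega)
    have hlt : m + 1 < n := by omega
    have hn0 : (0:ℝ) < n := Nat.cast_pos.mpr (by omega)
    have hsumA : Summable (fun t => (SurjCount t (m+1) : ℝ) / (n:ℝ)^t) :=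
      surjCount_summable hlt
    have hsumB : Summable (fun t => (SurjCount t m : ℝ) / (n:ℝ)^t) :=
      surjCount_summable (by omega)
    have h0 : (SurjCount 0 (m+1) : ℝ) / (n:ℝ)^0 = 0 := by
      rw [surjCount_zero_succ]; simp
    have hterm : ∀ t : ℕ, (SurjCount (t+1) (m+1) : ℝ) / (n:ℝ)^(t+1)
        = ((m:ℝ)+1)/n * ((SurjCount t (m+1) : ℝ) / (n:ℝ)^t
          + (SurjCount t m : ℝ) / (n:ℝ)^t) := by
      intro t
      rw [surjCount_succ]
      have he : (m+1) - 1 = m := by omega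
      rw [he]
      rw [pow_succ]
      push_cast
      rw [← add_div, div_mul_div_comm]
      ring
    have key : ∑' t : ℕ, (SurjCount t (m+1) : ℝ) / (n:ℝ)^t
        = ((m:ℝ)+1)/n * ((∑' t : ℕ, (SurjCount t (m+1) : ℝ) / (n:ℝ)^t)
          + ∑' t : ℕ, (SurjCount t m : ℝ) / (n:ℝ)^t) := by
      conv_lhs => rw [Summable.tsum_eq_zero_add hsumA]
      rw [h0, zero_add, tsum_congr hterm, tsum_mul_left, Summable.tsum_add hsumA hsumB]
    set A := ∑' t : ℕ, (SurjCount t (m+1) : ℝ) / (n:ℝ)^t with hA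
    set B := ∑' t : ℕ, (SurjCount t m : ℝ) / (n:ℝ)^t with hBdef
    set Cm : ℝ := ((n-1).choose m : ℝ) with hCmdef
    set Cm1 : ℝ := ((n-1).choose (m+1) : ℝ) with hCm1def
    have hCm : (0:ℝ) < Cm := Nat.cast_pos.mpr (Nat.choose_pos (by omega))
    have hCm1 : (0:ℝ) < Cm1 := Nat.cast_pos.mpr (Nat.choose_pos (by omega))
    have hid : Cm1 * ((m:ℝ)+1) = Cm * ((n:ℝ) - ((m:ℝ)+1)) := by
      have h := Nat.choose_succ_right_eq (n-1) m
      have h2 : ((n-1) - m : ℕ) = n - (m+1) := by omega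
      rw [h2] at h
      have h3 : ((n - (m+1) : ℕ) : ℝ) = (n:ℝ) - ((m:ℝ)+1) := by
        push_cast [Nat.cast_sub (by omega : m+1 ≤ n)]; ring
      calc Cm1 * ((m:ℝ)+1)
          = (((n-1).choose (m+1) * (m+1) : ℕ) : ℝ) := by rw [hCm1def]; push_cast; ring
        _ = (((n-1).choose m * (n - (m+1)) : ℕ) : ℝ) := by rw [h]
        _ = Cm * ((n:ℝ) - ((m:ℝ)+1)) := by rw [hCmdef]; push_cast [h3]; ring
    have k2 : (n:ℝ) * A = ((m:ℝ)+1) * (A + B) := by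
      calc (n:ℝ) * A = (n:ℝ) * (((m:ℝ)+1)/n * (A + B)) := by rw [← key]
        _ = ((m:ℝ)+1) * (A + B) := by field_simp
    have k3 : A * ((n:ℝ) - ((m:ℝ)+1)) = ((m:ℝ)+1) * B := by ring_nf; ring_nf at k2; linarith
    have hBC : B * Cm = 1 := by rw [hB]; field_simp
    have k4 : A * Cm1 * ((m:ℝ)+1) = 1 * ((m:ℝ)+1) := by
      calc A * Cm1 * ((m:ℝ)+1) = A * (Cm1 * ((m:ℝ)+1)) := by ring
        _ = A * (Cm * ((n:ℝ) - ((m:ℝ)+1))) := by rw [hid]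
        _ = (A * ((n:ℝ) - ((m:ℝ)+1))) * Cm := by ring
        _ = (((m:ℝ)+1) * B) * Cm := by rw [k3]
        _ = ((m:ℝ)+1) * (B * Cm) := by ring
        _ = 1 * ((m:ℝ)+1) := by rw [hBC]; ring
    have k5 : A * Cm1 = 1 :=
      mul_right_cancel₀ (by positivity : ((m:ℝ)+1) ≠ 0) k4
    rw [eq_div_iff (ne_of_gt hCm1)]
    exact k5

section SpanLemmas
open Matrix


variable {F : Type*} [Field F] {k n : ℕ} (G : Matrix (Fin k) (Fin n) F)

/-- If a set of columns does not span, there is a nonzero codeword vanishing on it. -/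
lemma exists_codeword_of_not_span (hG : G.rank = k) (S : Finset (Fin n))
    (hS : Submodule.span F ((fun j => fun r => G r j) '' (S : Set (Fin n))) ≠ ⊤) :
    ∃ x ∈ Submodule.span F (Set.range G), x ≠ 0 ∧ ∀ j ∈ S, x j = 0 := by
  classical
  have hfree : Module.Free F ((Fin k → F) ⧸
      Submodule.span F ((fun j => fun r => G r j) '' (S : Set (Fin n)))) := inferInstance
  obtain ⟨φ, hφ0, hφ⟩ := Submodule.exists_dual_map_eq_bot_of_lt_top
    (lt_top_iff_ne_top.mpr hS) inferInstance
  set x : Fin n → F := fun j => φ (fun r => G r j) with hx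
  have hcols : Submodule.span F (Set.range Gᵀ) = ⊤ := by
    apply Submodule.eq_top_of_finrank_eq
    change Module.finrank F (Submodule.span F (Set.range G.col)) = _
    rw [← Matrix.rank_eq_finrank_span_cols, hG, Module.finrank_fin_fun]
  refine ⟨x, ?_, ?_, ?_⟩
  · have : x = ∑ r, φ (fun j => if r = j then 1 else 0) • G r := by
      funext j
      simp only [hx]
      rw [LinearMap.pi_apply_eq_sum_univ φ (fun r => G r j), Finset.sum_apply]
      refine Finset.sum_congr rfl (fun r _ => ?_)
      simp [mul_comm]
    rw [this]
    exact Submodule.sum_mem _ (fun r _ =>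
      Submodule.smul_mem _ _ (Submodule.subset_span ⟨r, rfl⟩))
  · intro hx0
    apply hφ0
    have hker : Submodule.span F (Set.range Gᵀ) ≤ LinearMap.ker φ := by
      rw [Submodule.span_le]
      rintro - ⟨j, rfl⟩
      have : x j = 0 := by rw [hx0]; rfl
      exact this
    rw [hcols, top_le_iff] at hker
    exact LinearMap.ker_eq_top.mp hker
  · intro j hj
    have hmem : (fun r => G r j) ∈ Submodule.span F
        ((fun j => fun r => G r j) '' (S : Set (Fin n))) :=
      Submodule.subset_span ⟨j, hj, rfl⟩
    have : φ (fun r => G r j) ∈ Submodule.map φ (Submodule.span F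
        ((fun j => fun r => G r j) '' (S : Set (Fin n)))) :=
      Submodule.mem_map_of_mem hmem
    rw [hφ] at this
    exact this

lemma hamWt_le_of_vanish (x : Fin n → F) (S : Finset (Fin n)) (h : ∀ j ∈ S, x j = 0) :
    hamWt x ≤ n - S.card := by
  classical
  rw [hamWt, Nat.card_eq_fintype_card]
  calc Fintype.card {i : Fin n // x i ≠ 0}
      ≤ Fintype.card {i : Fin n // i ∉ S} := by
        apply Fintype.card_subtype_mono
        intro i hi hiS
        exact hi (h i hiS)
    _ = n - S.card := by
        rw [Fintype.card_subtype_compl, Fintype.card_fin, Fintype.card_coe]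
    
lemma card_ge_of_span (S : Finset (Fin n))
    (hS : Submodule.span F ((fun j => fun r => G r j) '' (S : Set (Fin n))) = ⊤) :
    k ≤ S.card := by
  classical
  have h1 : Module.finrank F (Fin k → F) = k := Module.finrank_fin_fun F
  have h2 : (fun j => fun r => G r j) '' (S : Set (Fin n))
      = ↑(S.image (fun j => fun r => G r j)) := by rw [Finset.coe_image]
  calc k = Module.finrank F (⊤ : Submodule F (Fin k → F)) := by rw [finrank_top, h1]
    _ = Module.finrank F (Submodule.span F
        ((fun j => fun r => G r j) '' (S : Set (Fin n)))) := by rw [hS]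
    _ ≤ (S.image (fun j => fun r => G r j)).card := by
        rw [h2]
        exact finrank_span_finset_le_card _
    _ ≤ S.card := Finset.card_image_le

end SpanLemmas

lemma harm_sum_aux {n d : ℕ} (hd : 1 ≤ d) (hdn : d ≤ n) :
    ∑ s ∈ Finset.range (n - d + 1), (n:ℝ)/((n:ℝ) - s) = n * (harm n - harm (d-1)) := by
  have h1 : harm n - harm (d-1) = ∑ i ∈ Finset.Ico (d-1) n, (1:ℝ)/(i+1) := by
    rw [harm, harm, eq_comm]
    exact Finset.sum_Ico_eq_sub _ (by omega)
  rw [h1, Finset.mul_sum]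
  refine Finset.sum_nbij' (fun s => n - 1 - s) (fun i => n - 1 - i) ?_ ?_ ?_ ?_ ?_
  · intro s hs
    rw [Finset.mem_range] at hs
    rw [Finset.mem_Ico]
    omega
  · intro i hi
    rw [Finset.mem_Ico] at hi
    rw [Finset.mem_range]
    omega
  · intro s hs
    rw [Finset.mem_range] at hs
    omega
  · intro i hi
    rw [Finset.mem_Ico] at hi
    omega
  · intro s hs
    rw [Finset.mem_range] at hs
    have h2 : ((n - 1 - s : ℕ) : ℝ) + 1 = (n:ℝ) - s := by
      have : ((n - 1 - s : ℕ) : ℝ) = (n:ℝ) - 1 - s := by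
        push_cast [Nat.cast_sub (by omega : s ≤ n - 1), Nat.cast_sub (by omega : 1 ≤ n)]
        ring
      rw [this]; ring
    rw [h2, mul_one_div]

lemma choose_ratio {n s : ℕ} (hn : 1 ≤ n) (hs : s < n) :
    ((n.choose s : ℝ))/(((n-1).choose s : ℝ)) = (n:ℝ)/((n:ℝ) - s) := by
  obtain ⟨m, rfl⟩ : ∃ m, n = m + 1 := ⟨n - 1, by omega⟩
  have h1 := Nat.add_one_mul_choose_eq m s
  have h2 := Nat.choose_succ_right_eq (m+1) s
  have hnat : (m+1) * m.choose s = (m+1).choose s * (m+1-s) := by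
    simpa [Nat.succ_eq_add_one] using h1.trans h2
  have hC : (0:ℝ) < (m.choose s : ℝ) := Nat.cast_pos.mpr (Nat.choose_pos (by omega))
  have hms : ((m+1-s : ℕ) : ℝ) = ((m:ℝ)+1) - s := by
    push_cast [Nat.cast_sub (by omega : s ≤ m+1)]; ring
  have hcast : ((m:ℝ)+1) * (m.choose s : ℝ) = ((m+1).choose s : ℝ) * (((m:ℝ)+1) - s) := by
    calc ((m:ℝ)+1) * (m.choose s : ℝ) = (((m+1) * m.choose s : ℕ) : ℝ) := by push_cast; ring
      _ = (((m+1).choose s * (m+1-s) : ℕ) : ℝ) := by rw [hnat]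
      _ = ((m+1).choose s : ℝ) * (((m:ℝ)+1) - s) := by push_cast [hms]; ring
  have hne : ((m:ℝ)+1) - s ≠ 0 := by
    have : (s:ℝ) < (m:ℝ)+1 := by exact_mod_cast hs
    linarith
  have hsimp : ((m+1-1 : ℕ)).choose s = m.choose s := by norm_num
  rw [hsimp]
  push_cast
  field_simp
  linarith [hcast]

lemma card_subtype_image_eq {β : Type*} [Fintype β] [DecidableEq β] (t : ℕ) (S : Finset β) :
    Nat.card {f : Fin t → β // Finset.image f Finset.univ = S} = SurjCount t S.card := by
  rw [← card_range_eq t S]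
  apply Nat.card_congr (Equiv.subtypeEquivRight ?_)
  intro f
  rw [← Finset.coe_inj, Finset.coe_image, Finset.coe_univ, Set.image_univ]

theorem stmt16 {F : Type*} [Field F] [Fintype F] {k n d : ℕ}
    (hk : 2 ≤ k) (hkn : k ≤ n) (hd : 1 ≤ d)
    (G : Matrix (Fin k) (Fin n) F) (hG : G.rank = k)
    (hd1 : ∀ x ∈ Submodule.span F (Set.range G), x ≠ 0 → d ≤ hamWt x)
    (hd2 : ∃ x ∈ Submodule.span F (Set.range G), x ≠ 0 ∧ hamWt x = d) :
    coverDepth G = n * (harm n - harm (d - 1)) - ∑ s ∈ Finset.Icc k (n - d),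
      (Nat.card {S : Finset (Fin n) // S.card = s ∧
          Submodule.span F ((fun j => fun r => G r j) '' (S : Set (Fin n))) = ⊤} : ℝ) /
        ((n - 1).choose s) := by
  classical
  have hn1 : 1 ≤ n := by omega
  have hdn : d ≤ n := by
    obtain ⟨x₀, -, -, hx₀wt⟩ := hd2
    rw [← hx₀wt, hamWt, Nat.card_eq_fintype_card]
    calc Fintype.card {i : Fin n // x₀ i ≠ 0}
        ≤ Fintype.card (Fin n) := Fintype.card_subtype_le _
      _ = n := Fintype.card_fin n
  set D : Finset (Finset (Fin n)) := Finset.univ.filter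
    (fun S : Finset (Fin n) =>
      ¬ Submodule.span F ((fun j => fun r => G r j) '' (S : Set (Fin n))) = ⊤) with hD
  have hmemD : ∀ S : Finset (Fin n), S ∈ D ↔
      ¬ Submodule.span F ((fun j => fun r => G r j) '' (S : Set (Fin n))) = ⊤ := by
    intro S
    rw [hD, Finset.mem_filter]
    simp only [Finset.mem_univ, true_and]
  have K1 : ∀ S : Finset (Fin n),
      ¬ Submodule.span F ((fun j => fun r => G r j) '' (S : Set (Fin n))) = ⊤ →
      S.card ≤ n - d := by
    intro S hS
    by_contra hc
    obtain ⟨x, hxmem, hxne, hxv⟩ := exists_codeword_of_not_span G hG S hS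
    have h1 : d ≤ hamWt x := hd1 x hxmem hxne
    have h2 : hamWt x ≤ n - S.card := hamWt_le_of_vanish x S hxv
    have h3 : S.card ≤ n := by
      have h4 := Finset.card_le_card (Finset.subset_univ S)
      simpa using h4
    omega
  -- Step 1 : coverDepth as a sum over non-spanning sets
  have step1 : coverDepth G = ∑ S ∈ D, (1:ℝ)/(((n-1).choose S.card : ℕ) : ℝ) := by
    rw [coverDepth]
    have hnat : ∀ t : ℕ, Nat.card {f : Fin t → Fin n //
        Submodule.span F (Set.range fun i => fun r => G r (f i)) ≠ ⊤}
        = ∑ S ∈ D, SurjCount t S.card := by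
      intro t
      have hrange : ∀ f : Fin t → Fin n, (Set.range fun i => fun r => G r (f i))
          = (fun j => fun r => G r j) ''
            ((Finset.image f Finset.univ : Finset (Fin n)) : Set (Fin n)) := by
        intro f
        rw [Finset.coe_image, Finset.coe_univ, Set.image_univ]
        exact Set.range_comp (fun j => fun r => G r j) f
      calc Nat.card {f : Fin t → Fin n //
            Submodule.span F (Set.range fun i => fun r => G r (f i)) ≠ ⊤}
          = (Finset.univ.filter (fun f : Fin t → Fin n =>
              Finset.image f Finset.univ ∈ D)).card := by
            rw [Nat.card_eq_fintype_card, Fintype.card_subtype]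
            congr 1
            apply Finset.filter_congr
            intro f _
            rw [hmemD, ← hrange f]
        _ = ∑ S ∈ D, ((Finset.univ.filter (fun f : Fin t → Fin n =>
              Finset.image f Finset.univ ∈ D)).filter
                (fun f => Finset.image f Finset.univ = S)).card :=
            Finset.card_eq_sum_card_fiberwise (fun f hf => (Finset.mem_filter.mp hf).2)
        _ = ∑ S ∈ D, SurjCount t S.card := by
            refine Finset.sum_congr rfl fun S hS => ?_
            rw [Finset.filter_filter]
            have heq : Finset.univ.filter (fun f : Fin t → Fin n =>
                Finset.image f Finset.univ ∈ D ∧ Finset.image f Finset.univ = S)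
                = Finset.univ.filter
                  (fun f : Fin t → Fin n => Finset.image f Finset.univ = S) := by
              apply Finset.filter_congr
              intro f _
              constructor
              · exact And.right
              · exact fun h => ⟨h ▸ hS, h⟩
            rw [heq, ← Fintype.card_subtype, ← Nat.card_eq_fintype_card,
              card_subtype_image_eq]
    have hterm : ∀ t : ℕ, (Nat.card {f : Fin t → Fin n //
        Submodule.span F (Set.range fun i => fun r => G r (f i)) ≠ ⊤} : ℝ) / (n:ℝ)^t
        = ∑ S ∈ D, (SurjCount t S.card : ℝ) / (n:ℝ)^t := by
      intro t
      rw [hnat t]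
      push_cast
      rw [Finset.sum_div]
    have hcardD : ∀ S ∈ D, S.card ≤ n - d := by
      intro S hS
      exact K1 S ((hmemD S).mp hS)
    rw [tsum_congr hterm, Summable.tsum_finsetSum (fun S hS => surjCount_summable
      (show S.card < n by have := hcardD S hS; omega))]
    refine Finset.sum_congr rfl fun S hS => ?_
    exact tsum_surjCount hn1 S.card (by have := hcardD S hS; omega)
  -- Step 2 : group by cardinality
  have hmaps : ∀ S ∈ D, S.card ∈ Finset.range (n - d + 1) := by
    intro S hS
    rw [Finset.mem_range]
    have := K1 S ((hmemD S).mp hS)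
    omega
  have step2 : ∑ S ∈ D, (1:ℝ)/(((n-1).choose S.card : ℕ) : ℝ)
      = ∑ s ∈ Finset.range (n - d + 1),
          (((D.filter (fun S => S.card = s)).card : ℕ) : ℝ)
            * ((1:ℝ)/(((n-1).choose s : ℕ) : ℝ)) := by
    rw [← Finset.sum_fiberwise_of_maps_to hmaps
      (fun S => (1:ℝ)/(((n-1).choose S.card : ℕ) : ℝ))]
    refine Finset.sum_congr rfl fun s _ => ?_
    calc ∑ S ∈ D.filter (fun S => S.card = s), (1:ℝ)/(((n-1).choose S.card : ℕ) : ℝ)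
        = ∑ _S ∈ D.filter (fun S => S.card = s), (1:ℝ)/(((n-1).choose s : ℕ) : ℝ) :=
          Finset.sum_congr rfl (fun S hS => by rw [(Finset.mem_filter.mp hS).2])
      _ = _ := by rw [Finset.sum_const, nsmul_eq_mul]
  -- counting identity
  have hνα : ∀ s : ℕ, (D.filter (fun S => S.card = s)).card
      + Nat.card {S : Finset (Fin n) // S.card = s ∧
          Submodule.span F ((fun j => fun r => G r j) '' (S : Set (Fin n))) = ⊤}
      = n.choose s := by
    intro s
    rw [Nat.card_eq_fintype_card, Fintype.card_subtype]
    have h1 : D.filter (fun S => S.card = s)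
        = (Finset.univ.filter (fun S : Finset (Fin n) => S.card = s)).filter
          (fun S : Finset (Fin n) => ¬ Submodule.span F
            ((fun j => fun r => G r j) '' (S : Set (Fin n))) = ⊤) := by
      rw [hD, Finset.filter_filter, Finset.filter_filter]
      apply Finset.filter_congr
      intro S _
      constructor
      · exact fun h => ⟨h.2, h.1⟩
      · exact fun h => ⟨h.2, h.1⟩
    have h2 : Finset.univ.filter (fun S : Finset (Fin n) => S.card = s ∧
        Submodule.span F ((fun j => fun r => G r j) '' (S : Set (Fin n))) = ⊤)
        = (Finset.univ.filter (fun S : Finset (Fin n) => S.card = s)).filter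
          (fun S : Finset (Fin n) => Submodule.span F
            ((fun j => fun r => G r j) '' (S : Set (Fin n))) = ⊤) := by
      rw [Finset.filter_filter]
    rw [h1, h2, add_comm, Finset.card_filter_add_card_filter_not,
      ← Finset.powerset_univ, ← Finset.powersetCard_eq_filter, Finset.card_powersetCard,
      Finset.card_univ, Fintype.card_fin]
  -- finale
  rw [step1, step2]
  have hsplit : ∀ s ∈ Finset.range (n - d + 1),
      (((D.filter (fun S => S.card = s)).card : ℕ) : ℝ)
        * ((1:ℝ)/(((n-1).choose s : ℕ) : ℝ))
      = (n:ℝ)/((n:ℝ) - s)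
        - (Nat.card {S : Finset (Fin n) // S.card = s ∧
            Submodule.span F ((fun j => fun r => G r j) '' (S : Set (Fin n))) = ⊤} : ℝ)
          / (((n-1).choose s : ℕ) : ℝ) := by
    intro s hs
    rw [Finset.mem_range] at hs
    have hslt : s < n := by omega
    have hcast : (((D.filter (fun S => S.card = s)).card : ℕ) : ℝ)
        = (n.choose s : ℝ) - (Nat.card {S : Finset (Fin n) // S.card = s ∧
            Submodule.span F ((fun j => fun r => G r j) '' (S : Set (Fin n))) = ⊤} : ℝ) := by
      have h5 := congrArg (Nat.cast : ℕ → ℝ) (hνα s)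
      push_cast at h5
      linarith
    rw [hcast, sub_mul, mul_one_div, mul_one_div, choose_ratio hn1 hslt]
  rw [Finset.sum_congr rfl hsplit, Finset.sum_sub_distrib]
  congr 1
  · exact harm_sum_aux hd hdn
  · refine (Finset.sum_subset ?_ ?_).symm
    · intro s hs
      rw [Finset.mem_Icc] at hs
      rw [Finset.mem_range]
      omega
    · intro s hs hns
      rw [Finset.mem_range] at hs
      rw [Finset.mem_Icc] at hns
      have hempty : IsEmpty {S : Finset (Fin n) // S.card = s ∧
          Submodule.span F ((fun j => fun r => G r j) '' (S : Set (Fin n))) = ⊤} := by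
        constructor
        rintro ⟨S, hc, hsp⟩
        have := card_ge_of_span G S hsp
        omega
      rw [Nat.card_of_isEmpty]
      norm_num
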